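/- Let 0 < μα < 1, let P = (1/(2α)) [[1, √(μα)-1],[√(μα)-1, (1-√(μα))²]] ⊗ I_d, let φ be μ-strongly convex with minimizer w*, and let V = θ^T P θ + φ(w) - φ(w*) with θ = [(w-w*)^T, (w_{-1}-w*)^T]^T. If z = w + γ(w - w_{-1}) with γ = (1-√(μα))/(1+√(μα)), then ||z - w|| ≤ (2√(2α)/(1+√(μα))) √V. -/

import Mathlib

open Matrix

set_option maxHeartbeats 1000000 in
theorem stmt_6 {d : ℕ} (μ α : ℝ) (hμ : 0 < μ) (hα : 0 < α) (hμα : μ * α < 1)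
    (φ : EuclideanSpace ℝ (Fin d) → ℝ) (wstar : EuclideanSpace ℝ (Fin d))
    (hsc : ∀ u : EuclideanSpace ℝ (Fin d),
      φ wstar + μ / 2 * ‖u - wstar‖ ^ 2 ≤ φ u)
    (P : Matrix (Fin d ⊕ Fin d) (Fin d ⊕ Fin d) ℝ)
    (hP : P = (1 / (2 * α)) •
      Matrix.fromBlocks (1 : Matrix (Fin d) (Fin d) ℝ)
        ((Real.sqrt (μ * α) - 1) • (1 : Matrix (Fin d) (Fin d) ℝ))
        ((Real.sqrt (μ * α) - 1) • (1 : Matrix (Fin d) (Fin d) ℝ))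
        (((1 - Real.sqrt (μ * α)) ^ 2) • (1 : Matrix (Fin d) (Fin d) ℝ)))
    (w wm1 : EuclideanSpace ℝ (Fin d))
    (θ : Fin d ⊕ Fin d → ℝ)
    (hθ : θ = Sum.elim (fun i => w i - wstar i) (fun i => wm1 i - wstar i))
    (V : ℝ) (hV : V = θ ⬝ᵥ P.mulVec θ + φ w - φ wstar)
    (γ : ℝ) (hγ : γ = (1 - Real.sqrt (μ * α)) / (1 + Real.sqrt (μ * α)))
    (z : EuclideanSpace ℝ (Fin d)) (hz : z = w + γ • (w - wm1)) :
    ‖z - w‖ ≤ 2 * Real.sqrt (2 * α) / (1 + Real.sqrt (μ * α)) * Real.sqrt V := by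
  set s := Real.sqrt (μ * α) with hsdef
  have hs0 : 0 ≤ s := Real.sqrt_nonneg _
  have hs2 : s ^ 2 = μ * α := Real.sq_sqrt (by positivity)
  have hs1 : s < 1 := by nlinarith
  -- the combined vector
  obtain ⟨v, hvdef⟩ : ∃ v : EuclideanSpace ℝ (Fin d),
      v = (fun i => (w i - wstar i) + (s - 1) * (wm1 i - wstar i) : Fin d → ℝ) := ⟨WithLp.toLp 2 _, rfl⟩
  have hdot : θ ⬝ᵥ P.mulVec θ = 1 / (2 * α) * ∑ i, (v i) ^ 2 := by
    subst hP hθ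
    simp only [Matrix.smul_mulVec, Matrix.fromBlocks_mulVec,
      Matrix.one_mulVec, dotProduct, Fintype.sum_sum_type,
      Sum.elim_inl, Sum.elim_inr, Pi.smul_apply, Pi.add_apply, smul_eq_mul]
    simp only [Sum.elim_comp_inl, Sum.elim_comp_inr]
    rw [← Finset.sum_add_distrib, Finset.mul_sum]
    apply Finset.sum_congr rfl
    intro i _
    simp only [hvdef]
    ring
  have hB : 0 ≤ φ w - φ wstar := by
    have := hsc w
    nlinarith [sq_nonneg ‖w - wstar‖, norm_nonneg (w - wstar)]
  have hSnn : 0 ≤ ∑ i, (v i) ^ 2 := Finset.sum_nonneg fun i _ => sq_nonneg _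
  have hVnn : 0 ≤ V := by
    rw [hV, hdot]
    have : 0 ≤ 1 / (2 * α) * ∑ i, (v i) ^ 2 := by positivity
    linarith
  have hnv : ‖v‖ ^ 2 = ∑ i, (v i) ^ 2 := by
    rw [EuclideanSpace.norm_eq, Real.sq_sqrt (by positivity)]
    apply Finset.sum_congr rfl
    intro i _
    rw [Real.norm_eq_abs, sq_abs]
  -- decomposition: (1-s) • (w - wm1) = v - s • (w - wstar)
  have hdec : (1 - s) • (w - wm1) = v - s • (w - wstar) := by
    ext i
    simp only [hvdef, PiLp.smul_apply, PiLp.sub_apply, smul_eq_mul]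
    ring
  have htri : (1 - s) * ‖w - wm1‖ ≤ ‖v‖ + s * ‖w - wstar‖ := by
    have h1 : ‖(1 - s) • (w - wm1)‖ = (1 - s) * ‖w - wm1‖ := by
      rw [norm_smul, Real.norm_eq_abs, abs_of_nonneg (by linarith)]
    have h2 : ‖s • (w - wstar)‖ = s * ‖w - wstar‖ := by
      rw [norm_smul, Real.norm_eq_abs, abs_of_nonneg hs0]
    calc (1 - s) * ‖w - wm1‖ = ‖v - s • (w - wstar)‖ := by rw [← hdec, h1]
      _ ≤ ‖v‖ + ‖s • (w - wstar)‖ := norm_sub_le _ _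
      _ = ‖v‖ + s * ‖w - wstar‖ := by rw [h2]
  -- bound the two pieces
  obtain ⟨A, hA⟩ : ∃ x : ℝ, x = 1 / (2 * α) * ∑ i, (v i) ^ 2 := ⟨_, rfl⟩
  obtain ⟨B, hBdef⟩ : ∃ x : ℝ, x = φ w - φ wstar := ⟨_, rfl⟩
  have hAnn : 0 ≤ A := by rw [hA]; positivity
  have hBnn : 0 ≤ B := by rw [hBdef]; exact hB
  have hVAB : V = A + B := by rw [hV, hdot, hA, hBdef]; ring
  have hv_le : ‖v‖ ≤ Real.sqrt (2 * α * A) := by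
    rw [← Real.sqrt_sq (norm_nonneg v)]
    apply Real.sqrt_le_sqrt
    rw [hnv, hA]; field_simp; exact le_rfl
  have hwst_le : s * ‖w - wstar‖ ≤ Real.sqrt (2 * α * B) := by
    have h1 : (s * ‖w - wstar‖) ^ 2 ≤ 2 * α * B := by
      have := hsc w
      have : μ / 2 * ‖w - wstar‖ ^ 2 ≤ B := by rw [hBdef]; linarith
      nlinarith [norm_nonneg (w - wstar)]
    calc s * ‖w - wstar‖ = Real.sqrt ((s * ‖w - wstar‖) ^ 2) := by
          rw [Real.sqrt_sq (by positivity)]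
      _ ≤ Real.sqrt (2 * α * B) := Real.sqrt_le_sqrt h1
  have hsum : Real.sqrt (2 * α * A) + Real.sqrt (2 * α * B) ≤ 2 * Real.sqrt α * Real.sqrt V := by
    have ha : 0 ≤ 2 * α * A := by positivity
    have hb : 0 ≤ 2 * α * B := by positivity
    have sA : Real.sqrt (2 * α * A) ^ 2 = 2 * α * A := Real.sq_sqrt ha
    have sB : Real.sqrt (2 * α * B) ^ 2 = 2 * α * B := Real.sq_sqrt hb
    have sV : Real.sqrt V ^ 2 = V := Real.sq_sqrt hVnn
    have sa : Real.sqrt α ^ 2 = α := Real.sq_sqrt hα.le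
    have nA : 0 ≤ Real.sqrt (2 * α * A) := Real.sqrt_nonneg _
    have nB : 0 ≤ Real.sqrt (2 * α * B) := Real.sqrt_nonneg _
    have nV : 0 ≤ Real.sqrt V := Real.sqrt_nonneg _
    have na : 0 ≤ Real.sqrt α := Real.sqrt_nonneg _
    nlinarith [sq_nonneg (Real.sqrt (2 * α * A) - Real.sqrt (2 * α * B)),
      sq_nonneg (Real.sqrt (2 * α * A) + Real.sqrt (2 * α * B) - 2 * Real.sqrt α * Real.sqrt V),
      mul_nonneg na nV, hVAB]
  have hkey : (1 - s) * ‖w - wm1‖ ≤ 2 * Real.sqrt α * Real.sqrt V :=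
    le_trans htri (le_trans (add_le_add hv_le hwst_le) hsum)
  -- now the goal
  have hzw : z - w = γ • (w - wm1) := by rw [hz]; abel
  have hγ0 : 0 ≤ γ := by
    rw [hγ]
    apply div_nonneg <;> linarith
  have hnorm : ‖z - w‖ = γ * ‖w - wm1‖ := by
    rw [hzw, norm_smul, Real.norm_eq_abs, abs_of_nonneg hγ0]
  rw [hnorm]
  have h1s : 0 < 1 + s := by linarith
  have hγeq : γ * ‖w - wm1‖ = ((1 - s) * ‖w - wm1‖) / (1 + s) := by
    rw [hγ]; field_simp
  rw [hγeq]
  rw [div_le_iff₀ h1s]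
  have hsqrt2 : Real.sqrt α ≤ Real.sqrt (2 * α) := Real.sqrt_le_sqrt (by linarith)
  calc (1 - s) * ‖w - wm1‖ ≤ 2 * Real.sqrt α * Real.sqrt V := hkey
    _ ≤ 2 * Real.sqrt (2 * α) * Real.sqrt V := by
        nlinarith [Real.sqrt_nonneg V]
    _ = 2 * Real.sqrt (2 * α) / (1 + s) * Real.sqrt V * (1 + s) := by
        field_simp
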